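/- Let s, q ∈ ℍ with s ∉ [q]. Then the conjugate Fueter operator applied in the variable q to the left slice hyperholomorphic Cauchy kernel satisfies: D̄ S_L^{-1}(s,q) = −F_L(s,q) s + q₀ F_L(s,q), i.e. D̄ S_L^{-1}(s,q) = Σ_{k=0}^{1} q₀^k F_L(s,q) (−1)^{k+1} s^{1−k}. -/

import Mathlib

noncomputable section

open scoped Quaternion
open Finset

/-- The imaginary units `e₁, e₂, e₃` of the quaternions `ℍ = ℍ[ℝ]`. -/
def e1 : ℍ[ℝ] := ⟨0, 1, 0, 0⟩
def e2 : ℍ[ℝ] := ⟨0, 0, 1, 0⟩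
def e3 : ℍ[ℝ] := ⟨0, 0, 0, 1⟩

/-- The (left) Fueter operator `Df = ∂_{q₀}f + e₁∂_{q₁}f + e₂∂_{q₂}f + e₃∂_{q₃}f`,
where the partial derivatives are the directional derivatives along `1, e₁, e₂, e₃`. -/
def Dop (f : ℍ[ℝ] → ℍ[ℝ]) (q : ℍ[ℝ]) : ℍ[ℝ] :=
  fderiv ℝ f q 1 + e1 * fderiv ℝ f q e1 + e2 * fderiv ℝ f q e2 + e3 * fderiv ℝ f q e3

/-- The (left) conjugate Fueter operator
`D̄f = ∂_{q₀}f − e₁∂_{q₁}f − e₂∂_{q₂}f − e₃∂_{q₃}f`. -/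
def Dbar (f : ℍ[ℝ] → ℍ[ℝ]) (q : ℍ[ℝ]) : ℍ[ℝ] :=
  fderiv ℝ f q 1 - e1 * fderiv ℝ f q e1 - e2 * fderiv ℝ f q e2 - e3 * fderiv ℝ f q e3

/-- The right Fueter operator `fD = ∂_{q₀}f + (∂_{q₁}f)e₁ + (∂_{q₂}f)e₂ + (∂_{q₃}f)e₃`. -/
def DopR (f : ℍ[ℝ] → ℍ[ℝ]) (q : ℍ[ℝ]) : ℍ[ℝ] :=
  fderiv ℝ f q 1 + fderiv ℝ f q e1 * e1 + fderiv ℝ f q e2 * e2 + fderiv ℝ f q e3 * e3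

/-- The right conjugate Fueter operator
`fD̄ = ∂_{q₀}f − (∂_{q₁}f)e₁ − (∂_{q₂}f)e₂ − (∂_{q₃}f)e₃`. -/
def DbarR (f : ℍ[ℝ] → ℍ[ℝ]) (q : ℍ[ℝ]) : ℍ[ℝ] :=
  fderiv ℝ f q 1 - fderiv ℝ f q e1 * e1 - fderiv ℝ f q e2 * e2 - fderiv ℝ f q e3 * e3

/-- The Laplacian in the four real variables `q₀, q₁, q₂, q₃`. -/
def Lap (f : ℍ[ℝ] → ℍ[ℝ]) (q : ℍ[ℝ]) : ℍ[ℝ] :=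
  fderiv ℝ (fun p => fderiv ℝ f p 1) q 1 + fderiv ℝ (fun p => fderiv ℝ f p e1) q e1 +
    fderiv ℝ (fun p => fderiv ℝ f p e2) q e2 + fderiv ℝ (fun p => fderiv ℝ f p e3) q e3

/-- `s ∈ [q]`: membership in the 2-sphere
`[q] = {p : Re(p) = Re(q), |Im(p)| = |Im(q)|}` of `q`. -/
def inSphereOf (s q : ℍ[ℝ]) : Prop := s.re = q.re ∧ ‖s.im‖ = ‖q.im‖

/-- `Q_{c,s}(q) = s² − 2 Re(q) s + |q|²`. -/
def Qc (s q : ℍ[ℝ]) : ℍ[ℝ] := s ^ 2 - 2 * (q.re : ℍ[ℝ]) * s + ((‖q‖ ^ 2 : ℝ) : ℍ[ℝ])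

/-- The left slice hyperholomorphic Cauchy kernel `S_L^{-1}(s,q) = (s − q̄) Q_{c,s}(q)⁻¹`. -/
def SL (s q : ℍ[ℝ]) : ℍ[ℝ] := (s - star q) * (Qc s q)⁻¹

/-- The right slice hyperholomorphic Cauchy kernel `S_R^{-1}(s,q) = Q_{c,s}(q)⁻¹ (s − q̄)`. -/
def SR (s q : ℍ[ℝ]) : ℍ[ℝ] := (Qc s q)⁻¹ * (s - star q)

/-- The left `F`-kernel `F_L(s,q) = −4 (s − q̄) Q_{c,s}(q)^{-2}`. -/
def FL (s q : ℍ[ℝ]) : ℍ[ℝ] := -4 * (s - star q) * ((Qc s q)⁻¹) ^ 2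

/-- The right `F`-kernel `F_R(s,q) = −4 Q_{c,s}(q)^{-2} (s − q̄)`. -/
def FR (s q : ℍ[ℝ]) : ℍ[ℝ] := -4 * ((Qc s q)⁻¹) ^ 2 * (s - star q)

/-- The Clifford–Appell polynomials
`Q_ℓ(q,q̄) = (2/((ℓ+1)(ℓ+2))) Σ_{j=0}^{ℓ} (ℓ−j+1) q^{ℓ−j} q̄^j`. -/
def QA (ℓ : ℕ) (q : ℍ[ℝ]) : ℍ[ℝ] :=
  ((2 : ℝ) / ((ℓ + 1) * (ℓ + 2))) •
    ∑ j ∈ Finset.range (ℓ + 1), ((ℓ - j + 1 : ℕ) : ℍ[ℝ]) * q ^ (ℓ - j) * (star q) ^ j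

/- ### Auxiliary lemmas -/

lemma norm_sq_quat (a : ℍ[ℝ]) : ‖a‖ ^ 2 = Quaternion.normSq a := by
  rw [pow_two, ← Quaternion.normSq_eq_norm_mul_self]

lemma two_coe : ((2:ℝ):ℍ[ℝ]) = 2 := by norm_cast

lemma four_coe : ((4:ℝ):ℍ[ℝ]) = 4 := by norm_cast
@[simp] lemma four_re' : (4:ℍ[ℝ]).re = 4 := by rw [← four_coe]; simp
@[simp] lemma four_imI' : (4:ℍ[ℝ]).imI = 0 := by rw [← four_coe]; simp
@[simp] lemma four_imJ' : (4:ℍ[ℝ]).imJ = 0 := by rw [← four_coe]; simp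
@[simp] lemma four_imK' : (4:ℍ[ℝ]).imK = 0 := by rw [← four_coe]; simp

@[simp] lemma two_re' : (2:ℍ[ℝ]).re = 2 := by rw [← two_coe]; simp
@[simp] lemma two_imI' : (2:ℍ[ℝ]).imI = 0 := by rw [← two_coe]; simp
@[simp] lemma two_imJ' : (2:ℍ[ℝ]).imJ = 0 := by rw [← two_coe]; simp
@[simp] lemma two_imK' : (2:ℍ[ℝ]).imK = 0 := by rw [← two_coe]; simp

lemma Qc_eq (s q : ℍ[ℝ]) :
    Qc s q = s ^ 2 - ((2 * q.re : ℝ) : ℍ[ℝ]) * s + ((Quaternion.normSq q : ℝ) : ℍ[ℝ]) := by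
  rw [Qc, norm_sq_quat, Quaternion.coe_mul, two_coe]

lemma norm_im_sq (a : ℍ[ℝ]) : ‖a.im‖ ^ 2 = a.imI ^ 2 + a.imJ ^ 2 + a.imK ^ 2 := by
  rw [norm_sq_quat, Quaternion.normSq_def']
  simp

lemma Qc_ne_zero (s q : ℍ[ℝ]) (h : ¬ inSphereOf s q) : Qc s q ≠ 0 := by
  intro h0
  apply h
  rw [Qc_eq] at h0
  have hre := congrArg QuaternionAlgebra.re h0
  have hI := congrArg QuaternionAlgebra.imI h0
  have hJ := congrArg QuaternionAlgebra.imJ h0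
  have hK := congrArg QuaternionAlgebra.imK h0
  simp only [pow_two, Quaternion.re_add, Quaternion.re_sub, Quaternion.re_mul,
    Quaternion.re_coe, Quaternion.imI_coe, Quaternion.imJ_coe, Quaternion.imK_coe,
    Quaternion.imI_add, Quaternion.imI_sub, Quaternion.imI_mul, Quaternion.imJ_add,
    Quaternion.imJ_sub, Quaternion.imJ_mul, Quaternion.imK_add, Quaternion.imK_sub,
    Quaternion.imK_mul, Quaternion.re_zero, Quaternion.imI_zero, Quaternion.imJ_zero,
    Quaternion.imK_zero, Quaternion.normSq_def'] at hre hI hJ hK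
  have hsim := norm_im_sq s
  have hqim := norm_im_sq q
  by_cases hsq : s.re = q.re
  · refine ⟨hsq, ?_⟩
    rw [hsq] at hre
    have h2 : ‖s.im‖ ^ 2 = ‖q.im‖ ^ 2 := by rw [hsim, hqim]; nlinarith [hre]
    rw [← Real.sqrt_sq (norm_nonneg s.im), ← Real.sqrt_sq (norm_nonneg q.im), h2]
  · exfalso
    have hI0 : s.imI = 0 := by
      rcases mul_eq_zero.1 (show (s.re - q.re) * s.imI = 0 by linear_combination hI / 2) with h' | h'
      · exact absurd (by linarith) hsq
      · exact h'
    have hJ0 : s.imJ = 0 := by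
      rcases mul_eq_zero.1 (show (s.re - q.re) * s.imJ = 0 by linear_combination hJ / 2) with h' | h'
      · exact absurd (by linarith) hsq
      · exact h'
    have hK0 : s.imK = 0 := by
      rcases mul_eq_zero.1 (show (s.re - q.re) * s.imK = 0 by linear_combination hK / 2) with h' | h'
      · exact absurd (by linarith) hsq
      · exact h'
    have hne : s.re - q.re ≠ 0 := sub_ne_zero.2 hsq
    nlinarith [hre, sq_nonneg (s.re - q.re), sq_pos_of_ne_zero hne, sq_nonneg q.imI,
      sq_nonneg q.imJ, sq_nonneg q.imK]

lemma Qc_fun_eq (s : ℍ[ℝ]) :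
    (fun p => Qc s p) = fun p : ℍ[ℝ] => s ^ 2 - (p + star p) * s + p * star p := by
  funext p
  rw [Qc_eq, Quaternion.self_add_star', Quaternion.self_mul_star]

def starCLM : ℍ[ℝ] →L[ℝ] ℍ[ℝ] :=
  LinearMap.toContinuousLinearMap
    { toFun := star
      map_add' := star_add
      map_smul' := fun r x => by ext <;> simp }

@[simp] lemma starCLM_apply (x : ℍ[ℝ]) : starCLM x = star x := rfl

lemma star_hasFDerivAt (q : ℍ[ℝ]) :
    HasFDerivAt (fun p : ℍ[ℝ] => star p) starCLM q := starCLM.hasFDerivAt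

lemma Qc_hasFDerivAt (s q : ℍ[ℝ]) :
    HasFDerivAt (fun p => Qc s p)
      ((0 : ℍ[ℝ] →L[ℝ] ℍ[ℝ]) -
        ((ContinuousLinearMap.id ℝ ℍ[ℝ] + starCLM).smulRight s) +
        (q • starCLM + (ContinuousLinearMap.id ℝ ℍ[ℝ]).smulRight (star q))) q := by
  rw [Qc_fun_eq]
  have h1 : HasFDerivAt (fun p : ℍ[ℝ] => (p + star p) * s)
      ((ContinuousLinearMap.id ℝ ℍ[ℝ] + starCLM).smulRight s) q :=
    ((hasFDerivAt_id q).add (star_hasFDerivAt q)).mul_const' s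
  have h2 : HasFDerivAt (fun p : ℍ[ℝ] => p * star p)
      (q • starCLM + (ContinuousLinearMap.id ℝ ℍ[ℝ]).smulRight (star q)) q :=
    (hasFDerivAt_id q).mul' (star_hasFDerivAt q)
  exact ((hasFDerivAt_const (s ^ 2) q).sub h1).add h2

lemma inv_Qc_hasFDerivAt (s q : ℍ[ℝ]) (hc : Qc s q ≠ 0) :
    HasFDerivAt (fun p => (Qc s p)⁻¹)
      ((-(ContinuousLinearMap.mulLeftRight ℝ ℍ[ℝ] (Qc s q)⁻¹ (Qc s q)⁻¹)).comp
        ((0 : ℍ[ℝ] →L[ℝ] ℍ[ℝ]) -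
          ((ContinuousLinearMap.id ℝ ℍ[ℝ] + starCLM).smulRight s) +
          (q • starCLM + (ContinuousLinearMap.id ℝ ℍ[ℝ]).smulRight (star q)))) q := by
  have hu := hasFDerivAt_ringInverse (𝕜 := ℝ) (Units.mk0 (Qc s q) hc)
  have := hu.comp q (Qc_hasFDerivAt s q)
  simp only [Units.val_mk0, Units.val_inv_eq_inv_val] at this hu ⊢
  have heq : (Ring.inverse ∘ fun p => Qc s p) = fun p : ℍ[ℝ] => (Qc s p)⁻¹ := by
    funext p
    simp [Function.comp, Ring.inverse_eq_inv']
  rwa [heq] at this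

lemma SL_fderiv_apply (s q : ℍ[ℝ]) (hc : Qc s q ≠ 0) (v : ℍ[ℝ]) :
    fderiv ℝ (fun p => SL s p) q v =
      (s - star q) * -((Qc s q)⁻¹ * (0 - (v + star v) * s + (q * star v + v * star q)) * (Qc s q)⁻¹) +
        (0 - star v) * (Qc s q)⁻¹ := by
  have hf : HasFDerivAt (fun p => SL s p)
      ((s - star q) • ((-(ContinuousLinearMap.mulLeftRight ℝ ℍ[ℝ] (Qc s q)⁻¹ (Qc s q)⁻¹)).comp
        ((0 : ℍ[ℝ] →L[ℝ] ℍ[ℝ]) -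
          ((ContinuousLinearMap.id ℝ ℍ[ℝ] + starCLM).smulRight s) +
          (q • starCLM + (ContinuousLinearMap.id ℝ ℍ[ℝ]).smulRight (star q)))) +
        ((0 : ℍ[ℝ] →L[ℝ] ℍ[ℝ]) - starCLM).smulRight (Qc s q)⁻¹) q := by
    simp only [SL]
    exact ((hasFDerivAt_const s q).sub (star_hasFDerivAt q)).mul' (inv_Qc_hasFDerivAt s q hc)
  rw [hf.fderiv]
  simp only [ContinuousLinearMap.add_apply, ContinuousLinearMap.smul_apply,
    ContinuousLinearMap.coe_comp', Function.comp_apply, ContinuousLinearMap.neg_apply,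
    ContinuousLinearMap.mulLeftRight_apply, ContinuousLinearMap.sub_apply,
    ContinuousLinearMap.zero_apply, ContinuousLinearMap.smulRight_apply,
    ContinuousLinearMap.id_apply, starCLM_apply, smul_eq_mul]

set_option maxHeartbeats 2000000 in
set_option maxRecDepth 100000 in
/-- for `s ∉ [q]`,
`D̄ S_L^{-1}(s,q) = −F_L(s,q) s + q₀ F_L(s,q) = Σ_{k=0}^{1} q₀^k F_L(s,q) (−1)^{k+1} s^{1−k}`. -/
theorem Dbar_SL (s q : ℍ[ℝ]) (h : ¬ inSphereOf s q) :
    Dbar (fun p => SL s p) q = -(FL s q * s) + q.re • FL s q ∧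
    Dbar (fun p => SL s p) q =
      ∑ k ∈ Finset.range 2, ((-1 : ℝ) ^ (k + 1) * q.re ^ k) • (FL s q * s ^ (1 - k)) := by
  have hc := Qc_ne_zero s q h
  set c := Qc s q with hcdef
  -- commutation facts
  have hcs : Commute c s := by
    rw [hcdef, Qc_eq]
    exact (((Commute.refl s).pow_left 2).sub_left
      ((Quaternion.coe_commute _ s).mul_left (Commute.refl s))).add_left
      (Quaternion.coe_commute _ s)
  have hics : Commute c⁻¹ s := hcs.inv_left₀
  have main : Dbar (fun p => SL s p) q = -(FL s q * s) + q.re • FL s q := by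
    rw [Dbar, SL_fderiv_apply s q hc, SL_fderiv_apply s q hc, SL_fderiv_apply s q hc,
      SL_fderiv_apply s q hc]
    have k1 : (0:ℍ[ℝ]) - ((1:ℍ[ℝ]) + star 1) * s + (q * star 1 + 1 * star q)
        = -(2 * s) + ((2 * q.re : ℝ) : ℍ[ℝ]) := by
      rw [star_one, one_mul, mul_one, Quaternion.self_add_star']
      ext <;> simp [two_mul] <;> ring
    have k2 : (0:ℍ[ℝ]) - (e1 + star e1) * s + (q * star e1 + e1 * star q)
        = ((2 * q.imI : ℝ) : ℍ[ℝ]) := by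
      ext <;> simp <;> simp [e1] <;> ring
    have k3 : (0:ℍ[ℝ]) - (e2 + star e2) * s + (q * star e2 + e2 * star q)
        = ((2 * q.imJ : ℝ) : ℍ[ℝ]) := by
      ext <;> simp <;> simp [e2] <;> ring
    have k4 : (0:ℍ[ℝ]) - (e3 + star e3) * s + (q * star e3 + e3 * star q)
        = ((2 * q.imK : ℝ) : ℍ[ℝ]) := by
      ext <;> simp <;> simp [e3] <;> ring
    have s1 : (0:ℍ[ℝ]) - star (1:ℍ[ℝ]) = -1 := by rw [star_one, zero_sub]
    have s2 : (0:ℍ[ℝ]) - star e1 = e1 := by ext <;> simp <;> simp [e1]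
    have s3 : (0:ℍ[ℝ]) - star e2 = e2 := by ext <;> simp <;> simp [e2]
    have s4 : (0:ℍ[ℝ]) - star e3 = e3 := by ext <;> simp <;> simp [e3]
    rw [k1, k2, k3, k4, s1, s2, s3, s4]
    -- middle commutation
    have m1 : c⁻¹ * (-(2 * s) + ((2 * q.re : ℝ) : ℍ[ℝ])) * c⁻¹
        = (-(2 * s) + ((2 * q.re : ℝ) : ℍ[ℝ])) * (c⁻¹ * c⁻¹) := by
      have hcomm : Commute c⁻¹ (-(2 * s) + ((2 * q.re : ℝ) : ℍ[ℝ])) :=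
        (((Commute.ofNat_right c⁻¹ 2).mul_right hics).neg_right).add_right
          ((Quaternion.coe_commute _ _).symm)
      rw [← mul_assoc, hcomm.eq, mul_assoc]
    have m2 : ∀ r : ℝ, c⁻¹ * ((r : ℍ[ℝ])) * c⁻¹ = ((r : ℍ[ℝ])) * (c⁻¹ * c⁻¹) := by
      intro r
      rw [← Quaternion.coe_commutes r c⁻¹, mul_assoc]
    rw [m1, m2, m2, m2]
    -- handle RHS
    rw [FL, pow_two, ← Quaternion.coe_mul_eq_smul]
    -- multiply out by c * c on the right
    refine mul_right_cancel₀ (mul_ne_zero hc hc) ?_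
    have hswap : ∀ X : ℍ[ℝ], s * (c * X) = c * (s * X) := fun X => by
      rw [← mul_assoc, ← hcs.eq, mul_assoc]
    have hswap2 : s * c = c * s := hcs.symm.eq
    have hclear : ∀ X : ℍ[ℝ], c⁻¹ * (c * X) = X := fun X => inv_mul_cancel_left₀ hc X
    have hclear2 : c⁻¹ * c = 1 := inv_mul_cancel₀ hc
    rw [← hcdef]
    simp only [mul_assoc, sub_mul, add_mul, neg_mul, mul_neg, one_mul, neg_neg,
      hswap, hswap2, hclear, hclear2, mul_one]
    -- now a polynomial identity
    rw [hcdef, Qc_eq]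
    ext <;>
      simp only [pow_two, Quaternion.re_add, Quaternion.re_sub, Quaternion.re_neg,
        Quaternion.re_mul, Quaternion.imI_add, Quaternion.imI_sub, Quaternion.imI_neg,
        Quaternion.imI_mul, Quaternion.imJ_add, Quaternion.imJ_sub, Quaternion.imJ_neg,
        Quaternion.imJ_mul, Quaternion.imK_add, Quaternion.imK_sub, Quaternion.imK_neg,
        Quaternion.imK_mul, Quaternion.re_coe, Quaternion.imI_coe, Quaternion.imJ_coe,
        Quaternion.imK_coe, Quaternion.re_star, Quaternion.imI_star, Quaternion.imJ_star,
        Quaternion.imK_star, Quaternion.normSq_def', two_re', two_imI', two_imJ', two_imK', four_re', four_imI', four_imJ', four_imK'] <;>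
      simp only [e1, e2, e3] <;>
      ring
  refine ⟨main, ?_⟩
  rw [main]
  rw [Finset.sum_range_succ, Finset.sum_range_succ, Finset.sum_range_zero]
  norm_num
end
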